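/- Let k ≥ 1 be an integer, let α₁, …, α_k > 0, δ > 0, R > 0, and let χ : ℝ → [0, ∞) be continuous with compact support. Then lim_{ε→0⁺} ∫_{(0,R)^k} χ(log((r₁^{2α₁}⋯r_k^{2α_k})/ε)) · (r₁⋯r_k)^{2δ} · (dr₁/r₁)⋯(dr_k/r_k) = 0, the integral being with respect to Lebesgue measure on (0,R)^k with density ∏_{i=1}^k r_i^{2δ−1}. -/
import Mathlib


open MeasureTheory Set Filter Topology

/-- for `αᵢ > 0`, `δ > 0`, `R > 0` and continuous compactly supported
`χ ≥ 0`, one has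
`∫_{(0,R)^k} χ(log((r₁^{2α₁}⋯r_k^{2α_k})/ε)) (r₁⋯r_k)^{2δ} dr₁/r₁ ⋯ dr_k/r_k → 0`
as `ε → 0⁺`. -/
theorem claim1_integral_tendsto_zero (k : ℕ) (hk : 1 ≤ k)
    (α : Fin k → ℝ) (hα : ∀ i, 0 < α i) (δ R : ℝ) (hδ : 0 < δ) (hR : 0 < R)
    (χ : ℝ → ℝ) (hχ_cont : Continuous χ) (hχ_supp : HasCompactSupport χ)
    (hχ_nonneg : ∀ x, 0 ≤ χ x) :
    Filter.Tendsto
      (fun ε : ℝ =>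
        ∫ r in Set.univ.pi fun _ : Fin k => Set.Ioo (0:ℝ) R,
          χ (Real.log ((∏ i, r i ^ (2 * α i)) / ε)) * ∏ i, r i ^ (2 * δ - 1))
      (nhdsWithin 0 (Set.Ioi (0:ℝ))) (nhds 0) := by
  set S : Set (Fin k → ℝ) := Set.univ.pi fun _ : Fin k => Set.Ioo (0:ℝ) R with hS
  have hSmeas : MeasurableSet S := MeasurableSet.univ_pi fun _ => measurableSet_Ioo
  -- bound on χ
  obtain ⟨x₀, hx₀⟩ := hχ_cont.norm.exists_forall_ge_of_hasCompactSupport hχ_supp.norm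
  set C : ℝ := ‖χ x₀‖ with hC
  -- bound on the support of χ
  obtain ⟨M, hM⟩ := (hχ_supp.isBounded).subset_closedBall 0
  have hχ_zero : ∀ x : ℝ, M < |x| → χ x = 0 := by
    intro x hx
    apply image_eq_zero_of_notMem_tsupport
    intro hmem
    have := hM hmem
    rw [Metric.mem_closedBall, Real.dist_eq, sub_zero] at this
    linarith
  -- integrability of the bound
  have h1 : IntegrableOn (fun t : ℝ => t ^ (2 * δ - 1)) (Set.Ioo 0 R) :=
    (intervalIntegral.integrableOn_Ioo_rpow_iff hR).2 (by linarith)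
  have h2 : Integrable (fun r : Fin k → ℝ =>
      ∏ i : Fin k, ((Set.Ioo (0:ℝ) R).indicator (fun t => t ^ (2 * δ - 1))) (r i)) :=
    Integrable.fintype_prod fun _ => (integrable_indicator_iff measurableSet_Ioo).2 h1
  have hprod_int : IntegrableOn (fun r : Fin k → ℝ => ∏ i, r i ^ (2 * δ - 1)) S := by
    rw [← integrable_indicator_iff hSmeas]
    have : S.indicator (fun r : Fin k → ℝ => ∏ i, r i ^ (2 * δ - 1)) =
        fun r : Fin k → ℝ =>
          ∏ i : Fin k, ((Set.Ioo (0:ℝ) R).indicator (fun t => t ^ (2 * δ - 1))) (r i) := by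
      funext r
      by_cases hr : r ∈ S
      · rw [Set.indicator_of_mem hr]
        refine Finset.prod_congr rfl fun i _ => ?_
        rw [Set.indicator_of_mem (hr i (Set.mem_univ i))]
      · rw [Set.indicator_of_notMem hr]
        rw [hS, Set.mem_univ_pi] at hr
        push_neg at hr
        obtain ⟨i, hi⟩ := hr
        exact (Finset.prod_eq_zero (Finset.mem_univ i)
          (Set.indicator_of_notMem hi _)).symm
      
    rw [this]
    exact h2
  have hbound_int : Integrable (fun r : Fin k → ℝ => C * ∏ i, r i ^ (2 * δ - 1))
      (volume.restrict S) := hprod_int.const_mul C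
  -- measurability of the integrands
  have hmeas : ∀ ε : ℝ, AEStronglyMeasurable
      (fun r : Fin k → ℝ =>
        χ (Real.log ((∏ i, r i ^ (2 * α i)) / ε)) * ∏ i, r i ^ (2 * δ - 1))
      (volume.restrict S) := by
    intro ε
    apply Measurable.aestronglyMeasurable
    apply Measurable.mul
    · apply hχ_cont.measurable.comp
      apply Real.measurable_log.comp
      apply Measurable.div _ measurable_const
      exact Finset.measurable_prod _ fun i _ => by fun_prop
    · exact Finset.measurable_prod _ fun i _ => by fun_prop
  have key := MeasureTheory.tendsto_integral_filter_of_dominated_convergence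
    (μ := volume.restrict S) (l := nhdsWithin (0:ℝ) (Set.Ioi (0:ℝ)))
    (f := fun _ : Fin k → ℝ => (0:ℝ))
    (F := fun ε (r : Fin k → ℝ) =>
      χ (Real.log ((∏ i, r i ^ (2 * α i)) / ε)) * ∏ i, r i ^ (2 * δ - 1))
    (fun r => C * ∏ i, r i ^ (2 * δ - 1))
    (Filter.Eventually.of_forall hmeas)
    (Filter.Eventually.of_forall fun ε => by
      rw [MeasureTheory.ae_restrict_iff' hSmeas]
      filter_upwards with r hr
      have hprodpos : 0 < ∏ i, r i ^ (2 * δ - 1) :=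
        Finset.prod_pos fun i _ => Real.rpow_pos_of_pos (hr i (Set.mem_univ i)).1 _
      rw [norm_mul, Real.norm_of_nonneg hprodpos.le]
      exact mul_le_mul_of_nonneg_right (hx₀ _) hprodpos.le)
    hbound_int
    (by
      rw [MeasureTheory.ae_restrict_iff' hSmeas]
      filter_upwards with r hr
      have hP : 0 < ∏ i, r i ^ (2 * α i) :=
        Finset.prod_pos fun i _ => Real.rpow_pos_of_pos (hr i (Set.mem_univ i)).1 _
      have hlog : Filter.Tendsto (fun ε : ℝ => Real.log ((∏ i, r i ^ (2 * α i)) / ε))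
          (nhdsWithin 0 (Set.Ioi (0:ℝ))) Filter.atTop := by
        have h1 : Filter.Tendsto (fun ε : ℝ =>
            Real.log (∏ i, r i ^ (2 * α i)) + -Real.log ε)
            (nhdsWithin 0 (Set.Ioi (0:ℝ))) Filter.atTop :=
          Filter.tendsto_atTop_add_const_left _ _
            (Filter.tendsto_neg_atBot_atTop.comp Real.tendsto_log_nhdsGT_zero)
        refine h1.congr' ?_
        filter_upwards [self_mem_nhdsWithin] with ε hε
        rw [Real.log_div hP.ne' (ne_of_gt hε)]
        ring
      have hχ0 : Filter.Tendsto (fun ε : ℝ =>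
          χ (Real.log ((∏ i, r i ^ (2 * α i)) / ε)))
          (nhdsWithin 0 (Set.Ioi (0:ℝ))) (nhds 0) := by
        have : ∀ᶠ ε in nhdsWithin (0:ℝ) (Set.Ioi (0:ℝ)),
            χ (Real.log ((∏ i, r i ^ (2 * α i)) / ε)) = 0 := by
          filter_upwards [hlog.eventually (Filter.eventually_gt_atTop M)] with ε hε
          exact hχ_zero _ (lt_of_lt_of_le hε (le_abs_self _))
        exact tendsto_const_nhds.congr' (this.mono fun ε h => h.symm)
      simpa using hχ0.mul_const (∏ i, r i ^ (2 * δ - 1)))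
  simpa using key
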